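/- Let G be a digraph with inner vertices V_I and suppose G contains no I-cycle (no directed cycle containing exactly one inner vertex). Define V_OC ⊆ V \ V_I with the property that for all u, v ∈ V_OC there is a directed path from u to v within V_OC. Define V_I^out (resp. V_I^in) as inner vertices having a path to (resp. from) some vertex of V_OC avoiding other inner vertices. Then every I-path between two vertices of V_I^out avoids V_OC, and every I-path between two vertices of V_I^in avoids V_OC. -/

import Mathlib

/-- A directed walk from `a` to `b` along relation `A`. -/
def IsWalkFrom {V : Type*} (A : V → V → Prop) (w : List V) (a b : V) : Prop :=
  w ≠ [] ∧ w.Chain' A ∧ w.head? = some a ∧ w.getLast? = some b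

/-- A directed path (distinct vertices) from `a` to `b` in the digraph `E`. -/
def IsPathFrom {V : Type*} (E : V → V → Prop) (w : List V) (a b : V) : Prop :=
  w.Nodup ∧ IsWalkFrom E w a b

/-- A directed cycle: a nonempty list of distinct vertices with arcs between
consecutive vertices and from the last back to the first. -/
def IsCycle {V : Type*} (E : V → V → Prop) : List V → Prop
  | [] => False
  | v :: l => (v :: l).Nodup ∧ List.Chain E v (l ++ [v])

/-- Internal vertices of a walk (all but the first and the last). -/
def internals {V : Type*} (w : List V) : List V := (w.drop 1).dropLast

/-- `arcOf c a b` : `(a, b)` is an arc of the cycle given by the list `c`. -/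
def arcOf {V : Type*} (c : List V) (a b : V) : Prop :=
  [a, b] <:+: c ∨ (c.getLast? = some a ∧ c.head? = some b)

/-- An I-path from `a` to `b`: a directed path between distinct inner vertices all of
whose internal vertices are non-inner. -/
def IsIPath {V : Type*} (E : V → V → Prop) (VI : Set V) (p : List V) (a b : V) : Prop :=
  IsPathFrom E p a b ∧ a ∈ VI ∧ b ∈ VI ∧ a ≠ b ∧ ∀ x ∈ internals p, x ∉ VI


lemma split_not_nodup {V : Type*} : ∀ (l : List V), ¬ l.Nodup →
    ∃ (a : List V) (x : V) (b c : List V), l = a ++ x :: (b ++ x :: c) := by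
  intro l
  induction l with
  | nil => intro h; exact absurd List.nodup_nil h
  | cons y t ih =>
    intro h
    rw [List.nodup_cons] at h
    push_neg at h
    by_cases hy : y ∈ t
    · obtain ⟨b, c, rfl⟩ := List.append_of_mem hy
      exact ⟨[], y, b, c, rfl⟩
    · obtain ⟨a, x, b, c, rfl⟩ := ih (h hy)
      exact ⟨y :: a, x, b, c, rfl⟩

lemma walk_append {V : Type*} {E : V → V → Prop} {w1 w2 : List V} {a b c : V}
    (h1 : IsWalkFrom E w1 a b) (h2 : IsWalkFrom E w2 b c) :
    IsWalkFrom E (w1 ++ w2.tail) a c := by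
  obtain ⟨hne1, hc1, hh1, hl1⟩ := h1
  obtain ⟨hne2, hc2, hh2, hl2⟩ := h2
  obtain ⟨t, rfl⟩ : ∃ t, w2 = b :: t := by
    cases w2 with
    | nil => exact absurd rfl hne2
    | cons z t =>
      have : z = b := by simpa using hh2
      exact ⟨t, by rw [this]⟩
  refine ⟨by simp [hne1], ?_, ?_, ?_⟩
  · refine List.IsChain.append hc1 (hc2.tail) ?_
    intro x hx y hy
    simp only [List.head?] at hy ⊢
    cases t with
    | nil => simp at hy
    | cons z t' =>
      simp at hy
      subst hy
      have : x = b := by rw [hl1] at hx; simpa using hx.symm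
      subst this
      exact (List.isChain_cons_cons.mp hc2).1
  · rw [List.head?_append_of_ne_nil _ hne1]; exact hh1
  · simp only [List.tail]
    cases t with
    | nil => simp at hl2; simpa [hl2] using hl1
    | cons z t' =>
      rw [List.getLast?_append]
      simpa using hl2

lemma closed_walk_cycle {V : Type*} {E : V → V → Prop} :
    ∀ (n : ℕ) (w : List V), w.length ≤ n → 2 ≤ w.length → w.Chain' E →
      ∀ v : V, w.head? = some v → w.getLast? = some v →
      ∃ c, IsCycle E c ∧ v ∈ c ∧ ∀ x ∈ c, x ∈ w := by
  intro n
  induction n with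
  | zero => intro w hw h2; omega
  | succ n ih =>
    intro w hwn h2 hch v hh hl
    obtain ⟨t, rfl⟩ : ∃ t, w = v :: t := by
      cases w with
      | nil => simp at hh
      | cons z t =>
        have hz : z = v := by simpa using hh
        exact ⟨t, by rw [hz]⟩
    have ht : t ≠ [] := by intro h; subst h; simp at h2
    have hlt : t.getLast? = some v := by
      cases h : t.getLast? with
      | none => exact absurd (by simpa using h) ht
      | some y =>
        rw [List.getLast?_cons, h] at hl
        simpa using hl
    have hts : t.dropLast ++ [v] = t := List.dropLast_append_getLast? v hlt
    by_cases hnd : (v :: t.dropLast).Nodup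
    · refine ⟨v :: t.dropLast, ⟨hnd, ?_⟩, by simp, ?_⟩
      · have : List.Chain' E (v :: (t.dropLast ++ [v])) := by rw [hts]; exact hch
        exact this
      · intro x hx
        rcases List.mem_cons.mp hx with h | h
        · simp [h]
        · exact List.mem_cons_of_mem _ (by rw [← hts]; exact List.mem_append_left _ h)
    · obtain ⟨a, x, b, cc, hu⟩ := split_not_nodup _ hnd
      -- w = v :: t = (v :: t.dropLast) ++ [v] = a ++ x :: (b ++ x :: cc) ++ [v]
      have hw : v :: t = a ++ (x :: (b ++ (x :: (cc ++ [v])))) := by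
        rw [show v :: t = (v :: t.dropLast) ++ [v] by rw [List.cons_append, hts], hu]
        simp
      set w' : List V := a ++ (x :: (cc ++ [v])) with hw'
      have hch1 := List.isChain_append.mp (hw ▸ hch)
      have hch2 := List.isChain_append.mp
        (show List.Chain' E ((x :: b) ++ (x :: (cc ++ [v]))) by
          rw [show (x :: b) ++ (x :: (cc ++ [v])) = x :: (b ++ (x :: (cc ++ [v]))) by simp]
          exact hch1.2.1)
      have hchw' : List.Chain' E w' :=
        List.isChain_append.mpr ⟨hch1.1, hch2.2.1, by
          intro p hp q hq
          exact hch1.2.2 p hp q (by simpa using hq)⟩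
      have hlen : w'.length ≤ n := by
        have h1 := congrArg List.length hw
        simp only [List.length_cons] at hwn
        simp at h1
        simp [hw']
        omega
      have hlen2 : 2 ≤ w'.length := by simp [hw']; omega
      have hhw' : w'.head? = some v := by
        cases a with
        | nil =>
          have : x = v := by
            have := congrArg List.head? hw
            simpa using this.symm
          simp [hw', this]
        | cons p q =>
          have : p = v := by
            have := congrArg List.head? hw
            simpa using this.symm
          simp [hw', this]
      have hlw' : w'.getLast? = some v := by
        have he : w' = (a ++ x :: cc) ++ [v] := by simp [hw']
        rw [he, List.getLast?_concat]
      obtain ⟨c, hc, hvc, hsub⟩ := ih w' hlen hlen2 hchw' v hhw' hlw'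
      refine ⟨c, hc, hvc, fun y hy => ?_⟩
      have := hsub y hy
      rw [hw]
      simp [hw'] at this ⊢
      tauto

lemma walk_two_le {V : Type*} {E : V → V → Prop} {w : List V} {a b : V}
    (h : IsWalkFrom E w a b) (hab : a ≠ b) : 2 ≤ w.length := by
  obtain ⟨hne, _, hh, hl⟩ := h
  match w with
  | [] => exact absurd rfl hne
  | [y] =>
    exfalso; apply hab
    have h1 : y = a := by simpa using hh
    have h2 : y = b := by simpa using hl
    rw [← h1, h2]
  | y :: z :: t => simp

lemma no_in_out {V : Type*} {E : V → V → Prop} {VI VOC : Set V}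
    (hVOCnoninner : ∀ x ∈ VOC, x ∉ VI)
    (hconn : ∀ u ∈ VOC, ∀ v ∈ VOC,
      ∃ w : List V, IsPathFrom E w u v ∧ ∀ x ∈ w, x ∈ VOC)
    (hnoIcycle : ¬ ∃ c : List V, IsCycle E c ∧ ∃! x, x ∈ c ∧ x ∈ VI)
    (k : V) (hkI : k ∈ VI)
    (hout : ∃ (w : List V) (jv : V), jv ∈ VOC ∧ IsPathFrom E w k jv ∧ ∀ x ∈ w.drop 1, x ∉ VI)
    (hin : ∃ (w : List V) (jv : V), jv ∈ VOC ∧ IsPathFrom E w jv k ∧ ∀ x ∈ w.dropLast, x ∉ VI) :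
    False := by
  obtain ⟨w1, jv1, hjv1, hp1, hi1⟩ := hout
  obtain ⟨w2, jv2, hjv2, hp2, hi2⟩ := hin
  obtain ⟨w3, hp3, hw3oc⟩ := hconn jv1 hjv1 jv2 hjv2
  have hW : IsWalkFrom E ((w1 ++ w3.tail) ++ w2.tail) k k :=
    walk_append (walk_append hp1.2 hp3.2) hp2.2
  set W := (w1 ++ w3.tail) ++ w2.tail with hWdef
  have hk_ne : k ≠ jv1 := fun h => hVOCnoninner jv1 hjv1 (h ▸ hkI)
  have h2 : 2 ≤ W.length := by
    have := walk_two_le hp1.2 hk_ne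
    simp [hWdef]
    omega
  have hmem : ∀ y ∈ W, y ∈ VI → y = k := by
    intro y hy hyI
    simp only [hWdef, List.mem_append] at hy
    rcases hy with (hy | hy) | hy
    · obtain ⟨r, rfl⟩ : ∃ r, w1 = k :: r := by
        cases w1 with
        | nil => exact absurd rfl hp1.2.1
        | cons z r =>
          have : z = k := by simpa using hp1.2.2.2.1
          exact ⟨r, by rw [this]⟩
      rcases List.mem_cons.mp hy with h | h
      · exact h
      · exact absurd hyI (hi1 y (by simpa using h))
    · exact absurd hyI (hVOCnoninner y (hw3oc y (List.mem_of_mem_tail hy)))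
    · have hy2 : y ∈ w2 := List.mem_of_mem_tail hy
      rw [← List.dropLast_append_getLast? k hp2.2.2.2.2] at hy2
      rcases List.mem_append.mp hy2 with h | h
      · exact absurd hyI (hi2 y h)
      · simpa using h
  obtain ⟨c, hcyc, hkc, hsub⟩ := closed_walk_cycle W.length W le_rfl h2 hW.2.1 k hW.2.2.1 hW.2.2.2
  exact hnoIcycle ⟨c, hcyc, k, ⟨hkc, hkI⟩, fun y ⟨hyc, hyI⟩ => hmem y (hsub y hyc) hyI⟩

lemma mem_internals_of {V : Type*} {p : List V} {u v y : V}
    (hh : p.head? = some u) (hl : p.getLast? = some v)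
    (hy : y ∈ p) (hyu : y ≠ u) (hyv : y ≠ v) : y ∈ internals p := by
  obtain ⟨t, rfl⟩ : ∃ t, p = u :: t := by
    cases p with
    | nil => simp at hh
    | cons z t =>
      have : z = u := by simpa using hh
      exact ⟨t, by rw [this]⟩
  have hyt : y ∈ t := by
    rcases List.mem_cons.mp hy with h | h
    · exact absurd h hyu
    · exact h
  have ht : t ≠ [] := fun h => by subst h; simp at hyt
  have hlt : t.getLast? = some v := by
    cases h : t.getLast? with
    | none => exact absurd (by simpa using h) ht
    | some z =>
      rw [List.getLast?_cons, h] at hl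
      simpa using hl
  have hts : t.dropLast ++ [v] = t := List.dropLast_append_getLast? v hlt
  show y ∈ t.dropLast
  rw [← hts] at hyt
  rcases List.mem_append.mp hyt with h | h
  · exact h
  · exact absurd (by simpa using h) hyv

lemma split_at_voc {V : Type*} {E : V → V → Prop} {VI VOC : Set V}
    (hVOCnoninner : ∀ x ∈ VOC, x ∉ VI) {u v : V} {p : List V}
    (hip : IsIPath E VI p u v) {x : V} (hx : x ∈ p) (hxoc : x ∈ VOC) :
    (∃ (w : List V) (jv : V), jv ∈ VOC ∧ IsPathFrom E w u jv ∧ ∀ y ∈ w.drop 1, y ∉ VI) ∧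
    (∃ (w : List V) (jv : V), jv ∈ VOC ∧ IsPathFrom E w jv v ∧ ∀ y ∈ w.dropLast, y ∉ VI) := by
  obtain ⟨⟨hnd, hne, hch, hh, hl⟩, huI, hvI, huv, hint⟩ := hip
  have hxI : x ∉ VI := hVOCnoninner x hxoc
  have hxu : x ≠ u := fun h => hxI (h ▸ huI)
  have hxv : x ≠ v := fun h => hxI (h ▸ hvI)
  obtain ⟨p1, p2, rfl⟩ := List.append_of_mem hx
  obtain ⟨q, rfl⟩ : ∃ q, p1 = u :: q := by
    cases p1 with
    | nil => exact absurd (by simpa using hh) hxu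
    | cons z q =>
      have : z = u := by simpa using hh
      exact ⟨q, by rw [this]⟩
  have hp2ne : p2 ≠ [] := by
    intro h; subst h
    apply hxv
    have h2 : (u :: (q ++ [x])).getLast? = some x := by
      rw [← List.cons_append]; exact List.getLast?_concat
    rw [show u :: q ++ x :: [] = u :: (q ++ [x]) by simp] at hl
    rw [h2] at hl
    simpa using hl
  have hlp2 : p2.getLast? = some v := by
    cases h : p2.getLast? with
    | none => exact absurd (by simpa using h) hp2ne
    | some z =>
      rw [List.getLast?_append, List.getLast?_cons, h] at hl
      simpa using hl
  have hp2split : p2.dropLast ++ [v] = p2 := List.dropLast_append_getLast? v hlp2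
  have hvp2 : v ∈ p2 := by rw [← hp2split]; simp
  have hdisj : (u :: q).Disjoint (x :: p2) := (List.nodup_append'.mp hnd).2.2
  have hndq : (u :: q).Nodup := (List.nodup_append'.mp hnd).1
  have hndxp2 : (x :: p2).Nodup := (List.nodup_append'.mp hnd).2.1
  have hchsplit := List.isChain_append.mp hch
  have hint' : ∀ y ∈ u :: q ++ x :: p2, y ≠ u → y ≠ v → y ∉ VI := by
    intro y hy hyu hyv
    exact hint y (mem_internals_of hh hl hy hyu hyv)
  constructor
  · -- prefix walk u :: q ++ [x]
    refine ⟨(u :: q) ++ [x], x, hxoc, ⟨?_, ?_, ?_, ?_, ?_⟩, ?_⟩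
    · exact hnd.sublist (((List.nil_sublist p2).cons₂ x).append_left (u :: q))
    · simp
    · have heq : (u :: q) ++ x :: p2 = ((u :: q) ++ [x]) ++ p2 := by simp
      exact (List.isChain_append.mp (heq ▸ hch)).1
    · simp
    · exact List.getLast?_concat
    · intro y hy
      simp only [List.cons_append, List.drop_succ_cons, List.drop_zero] at hy
      rcases List.mem_append.mp hy with h | h
      · refine hint' y (by simp [h]) ?_ ?_
        · intro he; subst he
          exact (List.nodup_cons.mp hndq).1 h
        · intro he; subst he
          exact hdisj (List.mem_cons_of_mem _ h) (List.mem_cons_of_mem _ hvp2)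
      · have : y = x := by simpa using h
        exact this ▸ hxI
  · -- suffix walk x :: p2
    refine ⟨x :: p2, x, hxoc, ⟨hndxp2, ?_, ?_, ?_, ?_⟩, ?_⟩
    · simp
    · exact hchsplit.2.1
    · simp
    · rw [List.getLast?_cons]
      cases h : p2.getLast? with
      | none => exact absurd (by simpa using h) hp2ne
      | some z => rw [h] at hlp2; simpa using hlp2
    · intro y hy
      have hdl : (x :: p2).dropLast = x :: p2.dropLast := by
        cases p2 with
        | nil => exact absurd rfl hp2ne
        | cons z r => simp
      rw [hdl] at hy
      rcases List.mem_cons.mp hy with h | h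
      · exact h ▸ hxI
      · have hyp2 : y ∈ p2 := by rw [← hp2split]; exact List.mem_append_left _ h
        refine hint' y (by simp [hyp2]) ?_ ?_
        · intro he; subst he
          exact hdisj List.mem_cons_self (List.mem_cons_of_mem _ hyp2)
        · intro he; subst he
          have hnd2 : p2.Nodup := (List.nodup_cons.mp hndxp2).2
          rw [← hp2split] at hnd2
          exact (List.nodup_append'.mp hnd2).2.2 h (by simp)
        

/-- in a digraph with no I-cycle, every I-path between two vertices of
`V_I^out` avoids `V_OC`, and every I-path between two vertices of `V_I^in` avoids
`V_OC`. -/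
theorem ipath_avoids_voc {V : Type*} (E : V → V → Prop) (VI VOC : Set V)
    (hVOCnoninner : ∀ x ∈ VOC, x ∉ VI)
    (hconn : ∀ u ∈ VOC, ∀ v ∈ VOC,
      ∃ w : List V, IsPathFrom E w u v ∧ ∀ x ∈ w, x ∈ VOC)
    (hnoIcycle : ¬ ∃ c : List V, IsCycle E c ∧ ∃! x, x ∈ c ∧ x ∈ VI)
    (Vout Vin : Set V)
    (hVout : Vout = {k | k ∈ VI ∧ ∃ (w : List V) (jv : V), jv ∈ VOC ∧
      IsPathFrom E w k jv ∧ ∀ x ∈ w.drop 1, x ∉ VI})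
    (hVin : Vin = {k | k ∈ VI ∧ ∃ (w : List V) (jv : V), jv ∈ VOC ∧
      IsPathFrom E w jv k ∧ ∀ x ∈ w.dropLast, x ∉ VI}) :
    (∀ u ∈ Vout, ∀ v ∈ Vout, ∀ p : List V, IsIPath E VI p u v →
      ∀ x ∈ p, x ∉ VOC) ∧
    (∀ u ∈ Vin, ∀ v ∈ Vin, ∀ p : List V, IsIPath E VI p u v →
      ∀ x ∈ p, x ∉ VOC) := by
  constructor
  · intro u hu v hv p hip x hx hxoc
    rw [hVout] at hv
    obtain ⟨hvI, hvout⟩ := hv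
    exact no_in_out hVOCnoninner hconn hnoIcycle v hvI hvout
      (split_at_voc hVOCnoninner hip hx hxoc).2
  · intro u hu v hv p hip x hx hxoc
    rw [hVin] at hu
    obtain ⟨huI, huin⟩ := hu
    exact no_in_out hVOCnoninner hconn hnoIcycle u huI
      (split_at_voc hVOCnoninner hip hx hxoc).1 huin
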